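/- arXiv:2305.10454 — 6 statements merged into one kernel-verified Lean document; each statement's English description precedes it below -/
import Mathlib

section
/- Let α < β, γ ∈ [α,β], and let a, b : [α,β] → ℝ be continuous with a(γ) ≠ 0 and b(γ) ≠ 0. Define (Ax)(t) = a(t)·x(γ) and (Bx)(t) = b(t)·x(t) on C[α,β], and let F(z) = Σ_{j=1}^{n} δⱼ z^j (no constant term). If b is not constant on any open subinterval of [α,β] (i.e., for every nonempty open interval J ⊆ (α,β), b is nonconstant on J), then A∘B ≠ B∘F(A) as operators on C[α,β]. -/
theorem stmt11 (α β γ : ℝ) (hαβ : α < β) (hγ : γ ∈ Set.Icc α β)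
    (a b : ℝ → ℝ) (ha : ContinuousOn a (Set.Icc α β)) (hb : ContinuousOn b (Set.Icc α β))
    (haγ : a γ ≠ 0) (hbγ : b γ ≠ 0) (n : ℕ) (δ : ℕ → ℝ)
    (hbnc : ∀ c d : ℝ, α ≤ c → c < d → d ≤ β →
      ∃ s₁ ∈ Set.Ioo c d, ∃ s₂ ∈ Set.Ioo c d, b s₁ ≠ b s₂) :
    let A : (ℝ → ℝ) → (ℝ → ℝ) := fun y s => a s * y γ
    let B : (ℝ → ℝ) → (ℝ → ℝ) := fun y s => b s * y s
    let FA : (ℝ → ℝ) → (ℝ → ℝ) :=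
      fun y s => ∑ j ∈ Finset.Icc 1 n, δ j * (A^[j] y) s
    ∃ x : ℝ → ℝ, ContinuousOn x (Set.Icc α β) ∧
      ∃ t ∈ Set.Icc α β, A (B x) t ≠ B (FA x) t := by
  intro A B FA
  set x : ℝ → ℝ := fun _ => 1 with hx
  refine ⟨x, continuousOn_const, ?_⟩
  by_contra h
  push_neg at h
  -- iterates on the constant function 1
  have hiter : ∀ j : ℕ, 1 ≤ j → ∀ s, (A^[j] x) s = a s * (a γ) ^ (j - 1) := by
    intro j hj
    induction j with
    | zero => omega
    | succ k ih =>
      intro s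
      rcases Nat.lt_or_ge 1 (k + 1) with h1 | h1
      · have hk : 1 ≤ k := by omega
        obtain ⟨m, rfl⟩ : ∃ m, k = m + 1 := ⟨k - 1, by omega⟩
        rw [Function.iterate_succ_apply']
        show a s * (A^[m + 1] x) γ = a s * a γ ^ (m + 1 + 1 - 1)
        rw [ih hk γ]
        have e1 : m + 1 - 1 = m := rfl
        have e2 : m + 1 + 1 - 1 = m + 1 := rfl
        rw [e1, e2, pow_succ]
        ring
      · have : k = 0 := by omega
        subst this
        simp [A, x]
  set K : ℝ := ∑ j ∈ Finset.Icc 1 n, δ j * (a γ) ^ (j - 1) with hK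
  have hFA : ∀ t, FA x t = a t * K := by
    intro t
    simp only [FA, hK, Finset.mul_sum]
    apply Finset.sum_congr rfl
    intro j hj
    rw [hiter j (Finset.mem_Icc.mp hj).1 t]
    ring
  have heq : ∀ t ∈ Set.Icc α β, a t * b γ = b t * (a t * K) := by
    intro t ht
    have := h t ht
    simp only [A, B, x, hFA t, mul_one] at this
    linarith [this]
  have habγ : a γ * b γ ≠ 0 := mul_ne_zero haγ hbγ
  have hK1 : K = 1 := by
    have h1 : a γ * b γ * K = a γ * b γ * 1 := by linear_combination -(heq γ hγ)
    exact (mul_left_cancel₀ habγ h1)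
  have bconst : ∀ t ∈ Set.Icc α β, a t ≠ 0 → b t = b γ := by
    intro t ht hat
    have h1 := heq t ht
    rw [hK1] at h1
    have h2 : a t * b t = a t * b γ := by linear_combination -h1
    exact mul_left_cancel₀ hat h2
  -- a nonzero near γ
  have hopen : {t | a t ≠ 0} ∈ nhdsWithin γ (Set.Icc α β) := (ha γ hγ).eventually_ne haγ
  rw [Metric.mem_nhdsWithin_iff] at hopen
  obtain ⟨ε, hε, hball⟩ := hopen
  have hane : ∀ t ∈ Set.Icc α β, |t - γ| < ε → a t ≠ 0 := by
    intro t ht hdist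
    exact hball ⟨by simpa [Metric.mem_ball, Real.dist_eq] using hdist, ht⟩
  obtain ⟨hαγ, hγβ⟩ := hγ
  rcases lt_or_eq_of_le hγβ with hlt | heqγ
  · -- γ < β : use interval (γ, min β (γ + ε))
    set d := min β (γ + ε) with hd
    have hcd : γ < d := lt_min hlt (by linarith)
    obtain ⟨s₁, hs₁, s₂, hs₂, hne⟩ := hbnc γ d hαγ hcd (min_le_left _ _)
    have key : ∀ s, s ∈ Set.Ioo γ d → b s = b γ := by
      intro s hs
      have hsI : s ∈ Set.Icc α β := ⟨by linarith [hs.1], le_of_lt (lt_of_lt_of_le hs.2 (min_le_left _ _))⟩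
      have hdist : |s - γ| < ε := by
        rw [abs_of_pos (by linarith [hs.1])]
        have := lt_of_lt_of_le hs.2 (min_le_right _ _)
        linarith
      exact bconst s hsI (hane s hsI hdist)
    exact hne (by rw [key s₁ hs₁, key s₂ hs₂])
  · -- γ = β : use interval (max α (β - ε), β)
    set c := max α (β - ε) with hc
    have hcd : c < β := max_lt hαβ (by linarith)
    obtain ⟨s₁, hs₁, s₂, hs₂, hne⟩ := hbnc c β (le_max_left _ _) hcd le_rfl
    have key : ∀ s, s ∈ Set.Ioo c β → b s = b γ := by
      intro s hs
      have hsI : s ∈ Set.Icc α β := ⟨le_of_lt (lt_of_le_of_lt (le_max_left _ _) hs.1), le_of_lt hs.2⟩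
      have hdist : |s - γ| < ε := by
        rw [heqγ, abs_of_neg (by linarith [hs.2]), neg_sub]
        have := lt_of_le_of_lt (le_max_right _ _) hs.1
        linarith
      exact bconst s hsI (hane s hsI hdist)
    exact hne (by rw [key s₁ hs₁, key s₂ hs₂])
end

section
/- Let α < β, γ ∈ [α,β], and let a, b : [α,β] → ℝ be continuous with a(γ) ≠ 0 and b(γ) ≠ 0. Define (Ax)(t) = a(t)·x(γ) and (Bx)(t) = b(t)·x(t) on C[α,β], and F(z) = Σ_{j=1}^{n} δⱼ z^j. Suppose b is constant on [α,β] with value b(γ) ≠ 0. Then A∘B = B∘F(A) on C[α,β] if and only if k₁ := Σ_{j=1}^{n} δⱼ·a(γ)^{j−1} = 1. -/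
lemma iter_aux (a : ℝ → ℝ) (γ : ℝ) :
    ∀ j : ℕ, 1 ≤ j → ∀ y : ℝ → ℝ, ∀ s : ℝ,
      ((fun y s => a s * y γ)^[j] y) s = a s * a γ ^ (j - 1) * y γ := by
  intro j
  induction j with
  | zero => omega
  | succ k ih =>
    intro _ y s
    rcases Nat.eq_zero_or_pos k with hk | hk
    · subst hk; simp
    · rw [Function.iterate_succ_apply']
      have := ih hk y
      simp only [this]
      have hpow : a γ ^ (k + 1 - 1) = a γ * a γ ^ (k - 1) := by
        rw [Nat.add_sub_cancel, ← pow_succ']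
        congr 1
        omega
      rw [hpow]
      ring

theorem stmt12 (α β γ : ℝ) (hαβ : α < β) (hγ : γ ∈ Set.Icc α β)
    (a b : ℝ → ℝ) (ha : ContinuousOn a (Set.Icc α β)) (hb : ContinuousOn b (Set.Icc α β))
    (haγ : a γ ≠ 0) (hbγ : b γ ≠ 0) (n : ℕ) (δ : ℕ → ℝ)
    (hbconst : ∀ t ∈ Set.Icc α β, b t = b γ) :
    let A : (ℝ → ℝ) → (ℝ → ℝ) := fun y s => a s * y γ
    let B : (ℝ → ℝ) → (ℝ → ℝ) := fun y s => b s * y s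
    let FA : (ℝ → ℝ) → (ℝ → ℝ) :=
      fun y s => ∑ j ∈ Finset.Icc 1 n, δ j * (A^[j] y) s
    ((∀ x : ℝ → ℝ, ContinuousOn x (Set.Icc α β) →
        ∀ t ∈ Set.Icc α β, A (B x) t = B (FA x) t) ↔
      (∑ j ∈ Finset.Icc 1 n, δ j * a γ ^ (j - 1)) = 1) := by
  intro A B FA
  have hiter : ∀ j ∈ Finset.Icc 1 n, ∀ y : ℝ → ℝ, ∀ s : ℝ,
      (A^[j] y) s = a s * a γ ^ (j - 1) * y γ := by
    intro j hj y s
    exact iter_aux a γ j (Finset.mem_Icc.mp hj).1 y s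
  constructor
  · intro h
    have h1 := h (fun _ => 1) continuousOn_const γ hγ
    simp only [A, B, FA] at h1
    rw [Finset.sum_congr rfl (fun j hj => by rw [hiter j hj])] at h1
    simp only [mul_one] at h1
    have h2 : ∑ x ∈ Finset.Icc 1 n, δ x * (a γ * a γ ^ (x - 1))
        = (∑ j ∈ Finset.Icc 1 n, δ j * a γ ^ (j - 1)) * a γ := by
      rw [Finset.sum_mul]; exact Finset.sum_congr rfl (fun j hj => by ring)
    rw [h2] at h1
    have haγbγ : a γ * b γ ≠ 0 := mul_ne_zero haγ hbγ
    have h3 : (∑ j ∈ Finset.Icc 1 n, δ j * a γ ^ (j - 1)) * (a γ * b γ)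
        = 1 * (a γ * b γ) := by linear_combination -h1
    exact mul_right_cancel₀ haγbγ h3
  · intro hk x hx t ht
    simp only [A, B, FA]
    rw [Finset.sum_congr rfl (fun j hj => by rw [hiter j hj])]
    have : ∑ j ∈ Finset.Icc 1 n, δ j * (a t * a γ ^ (j - 1) * x γ)
        = (∑ j ∈ Finset.Icc 1 n, δ j * a γ ^ (j - 1)) * (a t * x γ) := by
      rw [Finset.sum_mul]
      exact Finset.sum_congr rfl (fun j hj => by ring)
    rw [this, hk, hbconst t ht]
    ring
end

section
/- Let α < β, γ ∈ [α,β], and a, b : [α,β] → ℝ continuous with a(γ) ≠ 0 and b(γ) = 0. Define (Ax)(t) = a(t)·x(γ) and (Bx)(t) = b(t)·x(t) on C[α,β], and F(z) = Σ_{j=1}^{n} δⱼ z^j. Set k₁ = Σ_{j=1}^{n} δⱼ·a(γ)^{j−1}. Then A∘B = B∘F(A) on C[α,β] if and only if k₁ = 0 or supp a ∩ supp b = ∅. -/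
lemma stmt14_iter (a : ℝ → ℝ) (γ : ℝ) : ∀ j : ℕ, 1 ≤ j → ∀ (x : ℝ → ℝ) (t : ℝ),
    ((fun (y : ℝ → ℝ) (s : ℝ) => a s * y γ)^[j] x) t = a t * a γ ^ (j - 1) * x γ := by
  intro j
  induction j with
  | zero => omega
  | succ k ih =>
    intro _ x t
    rcases Nat.eq_zero_or_pos k with hk | hk
    · subst hk; simp
    · rw [Function.iterate_succ_apply']
      show a t * ((fun (y : ℝ → ℝ) (s : ℝ) => a s * y γ)^[k] x) γ = _
      rw [ih hk]
      have hpow : a γ * a γ ^ (k - 1) = a γ ^ (k + 1 - 1) := by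
        rw [← pow_succ']; congr 1; omega
      rw [show a γ ^ (k + 1 - 1) = a γ * a γ ^ (k - 1) from hpow.symm]
      ring

theorem stmt14 (α β γ : ℝ) (hαβ : α < β) (hγ : γ ∈ Set.Icc α β)
    (a b : ℝ → ℝ) (ha : ContinuousOn a (Set.Icc α β)) (hb : ContinuousOn b (Set.Icc α β))
    (haγ : a γ ≠ 0) (hbγ : b γ = 0) (n : ℕ) (δ : ℕ → ℝ) :
    let A : (ℝ → ℝ) → (ℝ → ℝ) := fun y s => a s * y γ
    let B : (ℝ → ℝ) → (ℝ → ℝ) := fun y s => b s * y s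
    let FA : (ℝ → ℝ) → (ℝ → ℝ) :=
      fun y s => ∑ j ∈ Finset.Icc 1 n, δ j * (A^[j] y) s
    ((∀ x : ℝ → ℝ, ContinuousOn x (Set.Icc α β) →
        ∀ t ∈ Set.Icc α β, A (B x) t = B (FA x) t) ↔
      ((∑ j ∈ Finset.Icc 1 n, δ j * a γ ^ (j - 1)) = 0 ∨
        {t | t ∈ Set.Icc α β ∧ a t ≠ 0} ∩ {t | t ∈ Set.Icc α β ∧ b t ≠ 0} = ∅)) := by
  intro A B FA
  have hFA : ∀ (x : ℝ → ℝ) (t : ℝ),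
      FA x t = a t * x γ * (∑ j ∈ Finset.Icc 1 n, δ j * a γ ^ (j - 1)) := by
    intro x t
    show (∑ j ∈ Finset.Icc 1 n, δ j * (A^[j] x) t) = _
    rw [Finset.mul_sum]
    apply Finset.sum_congr rfl
    intro j hj
    have hj1 : 1 ≤ j := (Finset.mem_Icc.mp hj).1
    rw [show A = (fun (y : ℝ → ℝ) (s : ℝ) => a s * y γ) from rfl,
      stmt14_iter a γ j hj1 x t]
    ring
  constructor
  · intro h
    by_cases hk : (∑ j ∈ Finset.Icc 1 n, δ j * a γ ^ (j - 1)) = 0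
    · exact Or.inl hk
    · right
      ext t
      simp only [Set.mem_inter_iff, Set.mem_setOf_eq, Set.mem_empty_iff_false, iff_false]
      rintro ⟨⟨ht, hat⟩, ⟨_, hbt⟩⟩
      have h1 := h (fun _ => 1) continuousOn_const t ht
      have hA : A (B (fun _ => 1)) t = 0 := by
        show a t * (b γ * 1) = 0
        rw [hbγ]; ring
      have hB : B (FA (fun _ => 1)) t =
          b t * (a t * 1 * (∑ j ∈ Finset.Icc 1 n, δ j * a γ ^ (j - 1))) := by
        show b t * FA (fun _ => 1) t = _
        rw [hFA]
      rw [hA, hB] at h1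
      have := h1.symm
      rcases mul_eq_zero.mp this with h' | h'
      · exact hbt h'
      · rcases mul_eq_zero.mp h' with h'' | h''
        · rcases mul_eq_zero.mp h'' with h3 | h3
          · exact hat h3
          · norm_num at h3
        · exact hk h''
  · intro hcase x hx t ht
    show a t * (b γ * x γ) = b t * FA x t
    rw [hbγ, hFA]
    rcases hcase with hk | hemp
    · rw [hk]; ring
    · have : a t = 0 ∨ b t = 0 := by
        by_contra hc
        push_neg at hc
        have : t ∈ ({t | t ∈ Set.Icc α β ∧ a t ≠ 0} ∩ {t | t ∈ Set.Icc α β ∧ b t ≠ 0}) :=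
          ⟨⟨ht, hc.1⟩, ⟨ht, hc.2⟩⟩
        rw [hemp] at this
        exact this
      rcases this with h0 | h0 <;> rw [h0] <;> ring
end

section
/- Let α < β, γ ∈ [α,β], and let a, b : [α,β] → ℝ be continuous, not identically zero, with a(γ) = b(γ) = 0. Define (Ax)(t) = a(t)·x(γ) and (Bx)(t) = b(t)·x(t) on C[α,β], and F(z) = Σ_{j=0}^{n} δⱼ z^j. Then A∘B = B∘F(A) on C[α,β] if and only if δ₀ = 0 and (δ₁ = 0 or supp a ∩ supp b = ∅). -/
theorem stmt15 (α β γ : ℝ) (hαβ : α < β) (hγ : γ ∈ Set.Icc α β)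
    (a b : ℝ → ℝ) (ha : ContinuousOn a (Set.Icc α β)) (hb : ContinuousOn b (Set.Icc α β))
    (hane : ∃ t ∈ Set.Icc α β, a t ≠ 0) (hbne : ∃ t ∈ Set.Icc α β, b t ≠ 0)
    (haγ : a γ = 0) (hbγ : b γ = 0) (n : ℕ) (hn : 1 ≤ n) (δ : ℕ → ℝ) :
    let A : (ℝ → ℝ) → (ℝ → ℝ) := fun y s => a s * y γ
    let B : (ℝ → ℝ) → (ℝ → ℝ) := fun y s => b s * y s
    let FA : (ℝ → ℝ) → (ℝ → ℝ) :=
      fun y s => δ 0 * y s + ∑ j ∈ Finset.Icc 1 n, δ j * (A^[j] y) s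
    ((∀ x : ℝ → ℝ, ContinuousOn x (Set.Icc α β) →
        ∀ t ∈ Set.Icc α β, A (B x) t = B (FA x) t) ↔
      (δ 0 = 0 ∧ (δ 1 = 0 ∨
        {t | t ∈ Set.Icc α β ∧ a t ≠ 0} ∩ {t | t ∈ Set.Icc α β ∧ b t ≠ 0} = ∅))) := by
  intro A B FA
  -- iterates at γ vanish for j ≥ 1
  have hiterγ : ∀ (x : ℝ → ℝ) (j : ℕ), 1 ≤ j → A^[j] x γ = 0 := by
    intro x j hj
    obtain ⟨k, rfl⟩ : ∃ k, j = k + 1 := ⟨j - 1, (Nat.succ_pred_eq_of_pos hj).symm⟩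
    rw [Function.iterate_succ_apply']
    show a γ * _ = 0
    rw [haγ, zero_mul]
  -- FA simplification
  have hFA : ∀ (x : ℝ → ℝ) (s : ℝ), FA x s = δ 0 * x s + δ 1 * (a s * x γ) := by
    intro x s
    show δ 0 * x s + ∑ j ∈ Finset.Icc 1 n, δ j * (A^[j] x) s = _
    congr 1
    rw [Finset.sum_eq_single_of_mem 1 (Finset.mem_Icc.mpr ⟨le_refl 1, hn⟩)]
    · simp [A]
    · intro j hj hj1
      have h2 : 2 ≤ j := by
        rcases Finset.mem_Icc.mp hj with ⟨h1, _⟩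
        omega
      obtain ⟨k, rfl⟩ : ∃ k, j = k + 1 := ⟨j - 1, by omega⟩
      rw [Function.iterate_succ_apply']
      show δ (k+1) * (a s * A^[k] x γ) = 0
      rw [hiterγ x k (by omega), mul_zero, mul_zero]
  -- LHS is always 0
  have hLHS : ∀ (x : ℝ → ℝ) (t : ℝ), A (B x) t = 0 := by
    intro x t
    show a t * (b γ * x γ) = 0
    rw [hbγ, zero_mul, mul_zero]
  constructor
  · intro h
    obtain ⟨t0, ht0, hbt0⟩ := hbne
    have hδ0 : δ 0 = 0 := by
      have ht0γ : t0 ≠ γ := fun he => hbt0 (he ▸ hbγ)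
      set x0 : ℝ → ℝ := fun s => (s - γ) / (t0 - γ) with hx0
      have hx0c : ContinuousOn x0 (Set.Icc α β) :=
        ((continuous_id.sub continuous_const).div_const _).continuousOn
      have := h x0 hx0c t0 ht0
      rw [hLHS] at this
      have hB : B (FA x0) t0 = b t0 * δ 0 := by
        show b t0 * FA x0 t0 = _
        rw [hFA]
        have : x0 t0 = 1 := div_self (sub_ne_zero.mpr (fun he => ht0γ (by linarith)))
        have h0 : x0 γ = 0 := by show (γ - γ) / (t0 - γ) = 0; simp
        rw [this, h0, mul_zero, mul_zero, add_zero, mul_one]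
      rw [hB] at this
      exact (mul_eq_zero.mp this.symm).resolve_left hbt0
    refine ⟨hδ0, ?_⟩
    by_cases hδ1 : δ 1 = 0
    · exact Or.inl hδ1
    · right
      ext t
      simp only [Set.mem_inter_iff, Set.mem_setOf_eq, Set.mem_empty_iff_false, iff_false]
      rintro ⟨⟨ht, hat⟩, ⟨_, hbt⟩⟩
      have := h (fun _ => 1) continuousOn_const t ht
      rw [hLHS (fun _ => 1) t] at this
      have hB : B (FA (fun _ => 1)) t = b t * (δ 1 * a t) := by
        show b t * FA (fun _ => 1) t = _
        rw [hFA (fun _ => 1) t, hδ0]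
        ring
      rw [hB] at this
      have := this.symm
      rcases mul_eq_zero.mp this with h1 | h2
      · exact hbt h1
      · rcases mul_eq_zero.mp h2 with h3 | h4
        · exact hδ1 h3
        · exact hat h4
  · rintro ⟨hδ0, hcase⟩ x hx t ht
    rw [hLHS]
    show 0 = b t * FA x t
    rw [hFA, hδ0, zero_mul, zero_add]
    rcases hcase with hδ1 | hdisj
    · rw [hδ1, zero_mul, mul_zero]
    · by_cases hat : a t = 0
      · rw [hat, zero_mul, mul_zero, mul_zero]
      · by_cases hbt : b t = 0
        · rw [hbt, zero_mul]
        · exfalso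
          have : t ∈ ({t | t ∈ Set.Icc α β ∧ a t ≠ 0} ∩ {t | t ∈ Set.Icc α β ∧ b t ≠ 0}) :=
            ⟨⟨ht, hat⟩, ⟨ht, hbt⟩⟩
          rw [hdisj] at this
          exact this
end

section
/- Let α < β, γ ∈ [α,β], and let a, b : [α,β] → ℝ be continuous. Define (Ax)(t) = a(t)·x(t) (multiplication) and (Bx)(t) = b(t)·x(γ) (evaluation at γ times b) on C[α,β], and let F(z) = Σ_{j=0}^{n} δⱼ z^j. Then A∘B = B∘F(A) on C[α,β] if and only if supp(a − F(a(γ))) ∩ supp b = ∅, i.e., for every t ∈ [α,β], b(t)·(a(t) − F(a(γ))) = 0. -/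
lemma iterA_eq (a : ℝ → ℝ) (j : ℕ) (y : ℝ → ℝ) (s : ℝ) :
    ((fun y s => a s * y s) : (ℝ → ℝ) → (ℝ → ℝ))^[j] y s = a s ^ j * y s := by
  induction j generalizing y with
  | zero => simp
  | succ k ih =>
    rw [Function.iterate_succ_apply']
    simp only [ih]
    ring

lemma sum_split (n : ℕ) (g : ℕ → ℝ) :
    ∑ j ∈ Finset.range (n + 1), g j = g 0 + ∑ j ∈ Finset.Icc 1 n, g j := by
  rw [← Finset.Ico_add_one_right_eq_Icc, Finset.sum_Ico_eq_sum_range, Finset.sum_range_succ']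
  simp [add_comm]

theorem stmt16 (α β γ : ℝ) (hαβ : α < β) (hγ : γ ∈ Set.Icc α β)
    (a b : ℝ → ℝ) (ha : ContinuousOn a (Set.Icc α β)) (hb : ContinuousOn b (Set.Icc α β))
    (n : ℕ) (δ : ℕ → ℝ) :
    let A : (ℝ → ℝ) → (ℝ → ℝ) := fun y s => a s * y s
    let B : (ℝ → ℝ) → (ℝ → ℝ) := fun y s => b s * y γ
    let FA : (ℝ → ℝ) → (ℝ → ℝ) :=
      fun y s => δ 0 * y s + ∑ j ∈ Finset.Icc 1 n, δ j * (A^[j] y) s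
    ((∀ x : ℝ → ℝ, ContinuousOn x (Set.Icc α β) →
        ∀ t ∈ Set.Icc α β, A (B x) t = B (FA x) t) ↔
      ∀ t ∈ Set.Icc α β,
        b t * (a t - ∑ j ∈ Finset.range (n + 1), δ j * a γ ^ j) = 0) := by
  intro A B FA
  have hS : ∑ j ∈ Finset.range (n + 1), δ j * a γ ^ j
      = δ 0 + ∑ j ∈ Finset.Icc 1 n, δ j * a γ ^ j := by
    rw [sum_split]; simp
  have hFA : ∀ x : ℝ → ℝ, FA x γ
      = (∑ j ∈ Finset.range (n + 1), δ j * a γ ^ j) * x γ := by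
    intro x
    show δ 0 * x γ + ∑ j ∈ Finset.Icc 1 n, δ j * (A^[j] x) γ = _
    have : ∀ j, (A^[j] x) γ = a γ ^ j * x γ := fun j => iterA_eq a j x γ
    simp only [this, hS]
    rw [add_mul, Finset.sum_mul]
    simp [mul_assoc]
  constructor
  · intro h t ht
    have h2 := h (fun _ => 1) continuousOn_const t ht
    simp only [A, B, FA, iterA_eq, mul_one] at h2
    linear_combination h2 - b t * hS
  · intro h x _ t ht
    have hb' := h t ht
    show a t * (b t * x γ) = b t * FA x γ
    rw [hFA]
    linear_combination x γ * hb'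
end

section
/- Define operators on functions x : [0,2] → ℝ by (A₀x)(t) = a(t)·x(t) with a(t) = sin(πt) for t ∈ [0,1] and a(t) = 0 for t ∈ (1,2], and (Bx)(t) = b(t)·x(1/2) with b(t) = sin(πt) for t ∈ [1,2] and b(t) = 0 for t ∈ [0,1). Then B∘A₀ − A₀∘B = B, and moreover for every ν ∈ ℝ, the operator A_ν = A₀ + ν·I satisfies B∘A_ν − A_ν∘B = B. -/
theorem stmt17 :
    let a : ℝ → ℝ := fun t => if t ≤ 1 then Real.sin (Real.pi * t) else 0
    let b : ℝ → ℝ := fun t => if 1 ≤ t then Real.sin (Real.pi * t) else 0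
    let B : (ℝ → ℝ) → (ℝ → ℝ) := fun y t => b t * y (1/2)
    ((∀ x : ℝ → ℝ, ∀ t ∈ Set.Icc (0:ℝ) 2,
        B (fun s => a s * x s) t - a t * B x t = B x t) ∧
      (∀ ν : ℝ, ∀ x : ℝ → ℝ, ∀ t ∈ Set.Icc (0:ℝ) 2,
        B (fun s => a s * x s + ν * x s) t - (a t * B x t + ν * B x t) = B x t)) := by
  intro a b B
  have ha : a (1/2) = 1 := by
    show (if (1:ℝ)/2 ≤ 1 then Real.sin (Real.pi * (1/2)) else 0) = 1
    rw [if_pos (by norm_num)]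
    rw [show Real.pi * (1/2) = Real.pi / 2 by ring, Real.sin_pi_div_two]
  have hab : ∀ t : ℝ, a t * b t = 0 := by
    intro t
    show (if t ≤ 1 then Real.sin (Real.pi * t) else 0) *
      (if 1 ≤ t then Real.sin (Real.pi * t) else 0) = 0
    by_cases h1 : t ≤ 1
    · by_cases h2 : (1:ℝ) ≤ t
      · have : t = 1 := le_antisymm h1 h2
        simp [this, Real.sin_pi]
      · simp [h1, h2]
    · simp [h1]
  constructor
  · intro x t _
    show b t * (a (1/2) * x (1/2)) - a t * (b t * x (1/2)) = b t * x (1/2)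
    rw [ha]
    linear_combination (-x (1/2)) * hab t
  · intro ν x t _
    show b t * (a (1/2) * x (1/2) + ν * x (1/2)) -
      (a t * (b t * x (1/2)) + ν * (b t * x (1/2))) = b t * x (1/2)
    rw [ha]
    linear_combination (-x (1/2)) * hab t
end
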